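/- Let O, O' be points in ℝ³ and r, r' > 0. The squared quadratic Wasserstein distance W₂² between the uniform probability distribution on the sphere of center O and radius r and the uniform probability distribution on the sphere of center O' and radius r' is at most |O' - O|² + (r' - r)². -/

import Mathlib

open MeasureTheory
open scoped RealInnerProductSpace ENNReal NNReal

noncomputable section

abbrev E3 := EuclideanSpace ℝ (Fin 3)

/-- Squared quadratic Wasserstein distance, as infimum over couplings. -/
def W2sq {E : Type*} [NormedAddCommGroup E] {mE : MeasurableSpace E}
    (μ ν : Measure E) : ℝ :=
  sInf {x : ℝ | ∃ π : Measure (E × E),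
    π.map Prod.fst = μ ∧ π.map Prod.snd = ν ∧ x = ∫ p, ‖p.1 - p.2‖ ^ 2 ∂π}

/-- Uniform (normalized 2-dimensional Hausdorff) probability distribution
on the sphere of center `O` and radius `r` in `ℝ³`. -/
def uniformOnSphere (O : E3) (r : ℝ) : Measure E3 :=
  ((Measure.hausdorffMeasure (d := 2) (Metric.sphere O r))⁻¹) •
    (Measure.hausdorffMeasure (d := 2)).restrict (Metric.sphere O r)

lemma sim_preimage (O O' : E3) (c : ℝ) (hc : c ≠ 0) (B : Set E3) :
    μH[2] ((fun v => c • (v - O) + O') ⁻¹' B)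
      = ((‖c‖₊⁻¹ ^ (2:ℝ) : ℝ≥0) : ℝ≥0∞) * μH[2] B := by
  have hcomp : ∀ v, AffineMap.homothety O c v + (O' - O) = c • (v - O) + O' := by
    intro v
    simp only [AffineMap.homothety_apply, vsub_eq_sub, vadd_eq_add]
    abel
  have hTeq : (fun v => c • (v - O) + O') ⁻¹' B
      = AffineMap.homothety O c ⁻¹' ((fun w => w + (O' - O)) ⁻¹' B) := by
    ext v
    simp only [Set.mem_preimage, hcomp v]
  have htrans : (fun w : E3 => w + (O' - O)) ⁻¹' B
      = (IsometryEquiv.addRight (O' - O)) ⁻¹' B := rfl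
  rw [hTeq, hausdorffMeasure_homothety_preimage (by norm_num : (0:ℝ) ≤ 2) O hc, htrans,
    IsometryEquiv.hausdorffMeasure_preimage]
  rw [ENNReal.smul_def, smul_eq_mul]

lemma sim_map_uniform (O O' : E3) (r r' : ℝ) (hr : 0 < r) (c : ℝ) (hc : c ≠ 0)
    (hcr : ‖c‖ * r = r') :
    (uniformOnSphere O r).map (fun v => c • (v - O) + O') = uniformOnSphere O' r' := by
  set T : E3 → E3 := fun v => c • (v - O) + O' with hT
  have hTm : Measurable T := by
    apply Continuous.measurable
    exact ((continuous_id.sub continuous_const).const_smul c).add continuous_const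
  set k : ℝ≥0∞ := ((‖c‖₊⁻¹ ^ (2:ℝ) : ℝ≥0) : ℝ≥0∞) with hk
  have hk0 : k ≠ 0 := by
    simp only [hk, ne_eq, ENNReal.coe_eq_zero]
    have h1 : (0:ℝ≥0) < ‖c‖₊⁻¹ := by
      rw [inv_pos]; exact nnnorm_pos.mpr hc
    exact (NNReal.rpow_pos h1).ne'
  have hktop : k ≠ ⊤ := ENNReal.coe_ne_top
  have hr' : 0 < r' := by
    rw [← hcr]; exact mul_pos (norm_pos_iff.mpr hc) hr
  have hTS : T ⁻¹' (Metric.sphere O' r') = Metric.sphere O r := by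
    ext v
    simp only [Set.mem_preimage, mem_sphere_iff_norm, hT]
    have h1 : c • (v - O) + O' - O' = c • (v - O) := by abel
    rw [h1, norm_smul, ← hcr]
    constructor
    · intro h
      exact mul_left_cancel₀ (by simpa using hc) h
    · intro h; rw [h]
  have hSm' : MeasurableSet (Metric.sphere O' r') :=
    (Metric.isClosed_sphere).measurableSet
  have hmapH : (μH[2] : Measure E3).map T = k • (μH[2] : Measure E3) := by
    ext A hA
    rw [Measure.map_apply hTm hA, Measure.smul_apply, smul_eq_mul, sim_preimage O O' c hc]
  have hmaprestrict : ((μH[2] : Measure E3).restrict (Metric.sphere O r)).map T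
      = k • (μH[2] : Measure E3).restrict (Metric.sphere O' r') := by
    rw [← hTS, ← Measure.restrict_map hTm hSm', hmapH, Measure.restrict_smul]
  have hHS : μH[2] (Metric.sphere O r) = k * μH[2] (Metric.sphere O' r') := by
    rw [← hTS, sim_preimage O O' c hc]
  simp only [uniformOnSphere]
  rw [Measure.map_smul, hmaprestrict, smul_smul, hHS]
  congr 1
  rw [ENNReal.mul_inv (Or.inl hk0) (Or.inl hktop), mul_comm k⁻¹ _, mul_assoc,
    ENNReal.inv_mul_cancel hk0 hktop, mul_one]

theorem w2sq_uniformOnSphere_le (O O' : E3) (r r' : ℝ) (hr : 0 < r) (hr' : 0 < r') :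
    W2sq (uniformOnSphere O r) (uniformOnSphere O' r') ≤ ‖O' - O‖ ^ 2 + (r' - r) ^ 2 := by
  classical
  set c : ℝ := r' / r with hc_def
  have hrne : r ≠ 0 := hr.ne'
  have hc : c ≠ 0 := div_ne_zero hr'.ne' hrne
  have hcpos : 0 < c := div_pos hr' hr
  set u : E3 := O' - O with hu
  set T : E3 → E3 := fun v => c • (v - O) + O' with hT
  set S : Set E3 := Metric.sphere O r with hS
  have hTcont : Continuous T :=
    ((continuous_id.sub continuous_const).const_smul c).add continuous_const
  have hTm : Measurable T := hTcont.measurable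
  set μ : Measure E3 := uniformOnSphere O r with hμ
  set ν : Measure E3 := uniformOnSphere O' r' with hν
  have hmapμ : μ.map T = ν :=
    sim_map_uniform O O' r r' hr c hc (by rw [Real.norm_eq_abs, abs_of_pos hcpos, hc_def, div_mul_cancel₀ _ hrne])
  set π : Measure (E3 × E3) := μ.map (fun v => (v, T v)) with hπ
  have hpairm : Measurable (fun v : E3 => (v, T v)) := measurable_id.prodMk hTm
  have hmarg1 : π.map Prod.fst = μ := by
    rw [hπ, Measure.map_map measurable_fst hpairm]
    exact Measure.map_id
  have hmarg2 : π.map Prod.snd = ν := by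
    rw [hπ, Measure.map_map measurable_snd hpairm]
    exact hmapμ
  have hintcont : Continuous (fun p : E3 × E3 => ‖p.1 - p.2‖ ^ 2) := by
    fun_prop
  have hint : ∫ p, ‖p.1 - p.2‖ ^ 2 ∂π = ∫ v, ‖v - T v‖ ^ 2 ∂μ := by
    rw [hπ, integral_map hpairm.aemeasurable hintcont.aestronglyMeasurable]
  have hbdd : BddBelow {x : ℝ | ∃ π : Measure (E3 × E3),
      π.map Prod.fst = μ ∧ π.map Prod.snd = ν ∧ x = ∫ p, ‖p.1 - p.2‖ ^ 2 ∂π} := by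
    refine ⟨0, ?_⟩
    rintro x ⟨π', -, -, rfl⟩
    exact integral_nonneg fun p => by positivity
  have hmem : (∫ v, ‖v - T v‖ ^ 2 ∂μ) ∈ {x : ℝ | ∃ π : Measure (E3 × E3),
      π.map Prod.fst = μ ∧ π.map Prod.snd = ν ∧ x = ∫ p, ‖p.1 - p.2‖ ^ 2 ∂π} :=
    ⟨π, hmarg1, hmarg2, hint.symm⟩
  have hle : W2sq μ ν ≤ ∫ v, ‖v - T v‖ ^ 2 ∂μ := csInf_le hbdd hmem
  refine hle.trans ?_
  -- now bound the integral
  by_cases hdeg : μH[2] S = 0 ∨ μH[2] S = ⊤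
  · have hμ0 : μ = 0 := by
      rcases hdeg with h | h
      · have : (μH[2] : Measure E3).restrict S = 0 := Measure.restrict_eq_zero.mpr h
        rw [hμ]; simp only [uniformOnSphere, ← hS, this, smul_zero]
      · rw [hμ]; simp only [uniformOnSphere, ← hS, h, ENNReal.inv_top, zero_smul]
    rw [hμ0, integral_zero_measure]
    positivity
  push_neg at hdeg
  obtain ⟨h0, htop⟩ := hdeg
  have hSm : MeasurableSet S := (Metric.isClosed_sphere).measurableSet
  have hprob : IsProbabilityMeasure μ := by
    constructor
    rw [hμ]
    simp only [uniformOnSphere, ← hS, Measure.smul_apply, Measure.restrict_apply_univ,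
      smul_eq_mul]
    exact ENNReal.inv_mul_cancel h0 htop
  have haeS : ∀ᵐ v ∂μ, v ∈ S := by
    rw [ae_iff]
    have : {v : E3 | ¬ v ∈ S} = Sᶜ := rfl
    rw [this, hμ]
    simp only [uniformOnSphere, ← hS, Measure.smul_apply, Measure.restrict_apply hSm.compl,
      Set.compl_inter_self, measure_empty, smul_eq_mul, mul_zero]
  set f : E3 → ℝ := fun v => ⟪v - O, u⟫ with hf
  have hf_cont : Continuous f := (continuous_id.sub continuous_const).inner continuous_const
  have hf_int : Integrable f μ := by
    refine Integrable.mono' (integrable_const (r * ‖u‖)) hf_cont.aestronglyMeasurable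
      (haeS.mono fun v hv => ?_)
    have hnv : ‖v - O‖ = r := mem_sphere_iff_norm.mp hv
    calc ‖f v‖ ≤ ‖v - O‖ * ‖u‖ := norm_inner_le_norm _ _
      _ = r * ‖u‖ := by rw [hnv]
  -- symmetry : integral of f is zero
  set σ : E3 → E3 := fun v => (-1 : ℝ) • (v - O) + O with hσ
  have hσm : Measurable σ := by
    apply Continuous.measurable
    exact ((continuous_id.sub continuous_const).const_smul (-1 : ℝ)).add continuous_const
  have hσmap : μ.map σ = μ :=
    sim_map_uniform O O r r hr (-1) (by norm_num) (by norm_num)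
  have hI : ∫ v, f v ∂μ = 0 := by
    have h1 : ∫ v, f v ∂μ = ∫ v, f (σ v) ∂μ := by
      conv_lhs => rw [← hσmap]
      rw [integral_map hσm.aemeasurable hf_cont.aestronglyMeasurable]
    have h2 : ∀ v, f (σ v) = - f v := by
      intro v
      have hσv : σ v - O = -(v - O) := by show (-1 : ℝ) • (v - O) + O - O = -(v - O); module
      simp only [hf, hσv, inner_neg_left]
    simp only [h2] at h1
    rw [integral_neg] at h1
    linarith
  have hval : ∀ᵐ v ∂μ, ‖v - T v‖ ^ 2 = (r - r') ^ 2 + ‖u‖ ^ 2 - 2 * (1 - c) * f v := by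
    refine haeS.mono fun v hv => ?_
    have hnv : ‖v - O‖ = r := mem_sphere_iff_norm.mp hv
    have hdiff : v - T v = (1 - c) • (v - O) - u := by
      simp only [hT, hu]; module
    rw [hdiff, norm_sub_sq_real, real_inner_smul_left, norm_smul, mul_pow, hnv]
    have h3 : ‖(1 : ℝ) - c‖ ^ 2 = (1 - c) ^ 2 := sq_abs _
    have h4 : (1 - c) ^ 2 * r ^ 2 = (r - r') ^ 2 := by
      rw [hc_def]; field_simp
    rw [h3, h4]
    simp only [hf]
    ring
  rw [integral_congr_ae hval]
  have hsplit : ∫ v, ((r - r') ^ 2 + ‖u‖ ^ 2 - 2 * (1 - c) * f v) ∂μ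
      = (r - r') ^ 2 + ‖u‖ ^ 2 - 2 * (1 - c) * ∫ v, f v ∂μ := by
    rw [integral_sub (integrable_const _) (hf_int.const_mul _), integral_const,
      integral_const_mul]
    simp
  rw [hsplit, hI, mul_zero, sub_zero, hu]
  ring_nf
  nlinarith [sq_nonneg (r - r'), sq_nonneg (r' - r)]

end
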